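/- For the complete bipartite graph K_{n,n} (n ≥ 2) with path metric, the p-distance matrix D_p is singular exactly when 2^p = n/(n−1), i.e., there exists a nonzero vector α with D_p α = 0 at p = log₂(n/(n−1)); explicitly α takes value 1/n on one part and −1/n on the other. -/

import Mathlib

open Matrix

lemma bipartite_key_sum {n : ℕ} (t : ℝ) (v : Fin (n + n) → ℝ) (i : Fin (n + n)) :
    (∑ j : Fin (n + n),
        (if i = j then (0 : ℝ) else if ((i : ℕ) < n ↔ (j : ℕ) < n) then t else 1) * v j)
      = (if (i : ℕ) < n
          then t * (∑ j : Fin n, v (Fin.castAdd n j)) + ∑ j : Fin n, v (Fin.natAdd n j)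
          else (∑ j : Fin n, v (Fin.castAdd n j)) + t * ∑ j : Fin n, v (Fin.natAdd n j))
        - t * v i := by
  have h1 : ∀ j : Fin (n + n),
      (if i = j then (0 : ℝ) else if ((i : ℕ) < n ↔ (j : ℕ) < n) then t else 1) * v j
        = (if ((i : ℕ) < n ↔ (j : ℕ) < n) then t else 1) * v j
          - (if i = j then (if ((i : ℕ) < n ↔ (j : ℕ) < n) then t else 1) * v j else 0) := by
    intro j
    by_cases h : i = j <;> simp [h]
  rw [Finset.sum_congr rfl fun j _ => h1 j, Finset.sum_sub_distrib, Finset.sum_ite_eq,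
    if_pos (Finset.mem_univ i), if_pos Iff.rfl]
  congr 1
  by_cases hi : (i : ℕ) < n
  · simp only [hi, if_true]
    rw [Fin.sum_univ_add]
    congr 1
    · rw [Finset.mul_sum]
      refine Finset.sum_congr rfl fun j _ => ?_
      have : ((Fin.castAdd n j : Fin (n + n)) : ℕ) < n := by simpa using j.isLt
      simp [hi, this]
    · refine Finset.sum_congr rfl fun j _ => ?_
      have : ¬ ((Fin.natAdd n j : Fin (n + n)) : ℕ) < n := by simp
      simp [hi, this]
  · simp only [hi, if_false]
    rw [Fin.sum_univ_add]
    congr 1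
    · refine Finset.sum_congr rfl fun j _ => ?_
      have : ((Fin.castAdd n j : Fin (n + n)) : ℕ) < n := by simpa using j.isLt
      simp [hi, this]
    · rw [Finset.mul_sum]
      refine Finset.sum_congr rfl fun j _ => ?_
      have : ¬ ((Fin.natAdd n j : Fin (n + n)) : ℕ) < n := by simp
      simp [hi, this]

/-- For `K_{n,n}` (`n ≥ 2`), the `p`-distance matrix is singular exactly when
`2^p = n/(n-1)`, with explicit kernel vector `1/n` on one part and `-1/n` on the other at
`p = log₂(n/(n-1))`. -/
theorem bipartite_nn_singular {n : ℕ} (hn : 2 ≤ n)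
    (D : ℝ → Matrix (Fin (n + n)) (Fin (n + n)) ℝ)
    (hD : ∀ p i j, D p i j =
      if i = j then 0 else if ((i : ℕ) < n ↔ (j : ℕ) < n) then (2 : ℝ) ^ p else 1)
    (α : Fin (n + n) → ℝ)
    (hα : ∀ i, α i = if (i : ℕ) < n then (1 : ℝ) / n else -(1 / n)) :
    (∀ p : ℝ, 0 ≤ p → (¬ IsUnit (D p) ↔ (2 : ℝ) ^ p = (n : ℝ) / ((n : ℝ) - 1))) ∧
      α ≠ 0 ∧ (D (Real.logb 2 ((n : ℝ) / ((n : ℝ) - 1)))).mulVec α = 0 := by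
  have hn2 : (2 : ℝ) ≤ (n : ℝ) := by exact_mod_cast hn
  have hn0 : (n : ℝ) ≠ 0 := by linarith
  have hn1 : (0 : ℝ) < (n : ℝ) - 1 := by linarith
  -- mulVec formula
  have hmul : ∀ p : ℝ, ∀ v : Fin (n + n) → ℝ, ∀ i : Fin (n + n),
      (D p).mulVec v i
        = (if (i : ℕ) < n
            then (2:ℝ)^p * (∑ j : Fin n, v (Fin.castAdd n j)) + ∑ j : Fin n, v (Fin.natAdd n j)
            else (∑ j : Fin n, v (Fin.castAdd n j)) + (2:ℝ)^p * ∑ j : Fin n, v (Fin.natAdd n j))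
          - (2:ℝ)^p * v i := by
    intro p v i
    rw [Matrix.mulVec, dotProduct]
    rw [Finset.sum_congr rfl fun j _ => by rw [hD p i j]]
    exact bipartite_key_sum ((2:ℝ)^p) v i
  -- sums of α over the two parts
  have hS1α : (∑ j : Fin n, α (Fin.castAdd n j)) = 1 := by
    have : ∀ j : Fin n, α (Fin.castAdd n j) = 1 / n := by
      intro j
      rw [hα]
      have : ((Fin.castAdd n j : Fin (n + n)) : ℕ) < n := by simpa using j.isLt
      simp [this]
    rw [Finset.sum_congr rfl fun j _ => this j, Finset.sum_const, Finset.card_univ,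
      Fintype.card_fin, nsmul_eq_mul]
    field_simp
  have hS2α : (∑ j : Fin n, α (Fin.natAdd n j)) = -1 := by
    have : ∀ j : Fin n, α (Fin.natAdd n j) = -(1 / n) := by
      intro j
      rw [hα]
      have : ¬ ((Fin.natAdd n j : Fin (n + n)) : ℕ) < n := by simp
      simp [this]
    rw [Finset.sum_congr rfl fun j _ => this j, Finset.sum_const, Finset.card_univ,
      Fintype.card_fin, nsmul_eq_mul]
    field_simp
  -- if 2^p = n/(n-1) then D p · α = 0
  have hker : ∀ p : ℝ, (2 : ℝ) ^ p = (n : ℝ) / ((n : ℝ) - 1) → (D p).mulVec α = 0 := by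
    intro p hp
    funext i
    rw [hmul p α i, hS1α, hS2α, hα]
    have ht : (2:ℝ)^p * ((n:ℝ) - 1) = n := by
      rw [hp]; field_simp
    by_cases hi : (i : ℕ) < n <;> simp only [hi, if_true, if_false, Pi.zero_apply] <;>
      [skip; skip] <;> field_simp <;> nlinarith [ht]
  have hαne : α ≠ 0 := by
    intro h
    have h0 : (0 : ℕ) < n + n := by omega
    have := congrFun h (⟨0, h0⟩ : Fin (n + n))
    rw [hα] at this
    have hlt : ((⟨0, h0⟩ : Fin (n + n)) : ℕ) < n := by simpa using by omega
    rw [if_pos hlt] at this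
    simp only [Pi.zero_apply] at this
    have : (1 : ℝ) / n ≠ 0 := by positivity
    simp_all
  refine ⟨?_, hαne, ?_⟩
  · intro p _
    have ht0 : (0 : ℝ) < (2:ℝ)^p := Real.rpow_pos_of_pos (by norm_num) p
    constructor
    · -- singular → 2^p = n/(n-1); contrapositive
      intro hsing
      by_contra hne
      apply hsing
      rw [← Matrix.mulVec_injective_iff_isUnit]
      intro v w hvw
      -- reduce to kernel
      suffices hker0 : ∀ u : Fin (n + n) → ℝ, (D p).mulVec u = 0 → u = 0 by
        have : (D p).mulVec (v - w) = 0 := by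
          rw [Matrix.mulVec_sub, hvw, sub_self]
        have := hker0 _ this
        exact sub_eq_zero.mp this
      intro u hu
      set t := (2:ℝ)^p with htdef
      set S1 := ∑ j : Fin n, u (Fin.castAdd n j) with hS1def
      set S2 := ∑ j : Fin n, u (Fin.natAdd n j) with hS2def
      have hE : ∀ i : Fin (n + n),
          t * u i = if (i : ℕ) < n then t * S1 + S2 else S1 + t * S2 := by
        intro i
        have := congrFun hu i
        rw [hmul p u i] at this
        simp only [Pi.zero_apply] at this
        linarith [this]
      have hEA : ∀ j : Fin n, t * u (Fin.castAdd n j) = t * S1 + S2 := by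
        intro j
        have hlt : ((Fin.castAdd n j : Fin (n + n)) : ℕ) < n := by simpa using j.isLt
        rw [hE, if_pos hlt]
      have hEB : ∀ j : Fin n, t * u (Fin.natAdd n j) = S1 + t * S2 := by
        intro j
        have hlt : ¬ ((Fin.natAdd n j : Fin (n + n)) : ℕ) < n := by simp
        rw [hE, if_neg hlt]
      have h1 : t * S1 = n * (t * S1 + S2) :=
        calc t * S1 = ∑ j : Fin n, t * u (Fin.castAdd n j) := by
              rw [hS1def, Finset.mul_sum]
          _ = ∑ _j : Fin n, (t * S1 + S2) := Finset.sum_congr rfl fun j _ => hEA j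
          _ = n * (t * S1 + S2) := by
              rw [Finset.sum_const, Finset.card_univ, Fintype.card_fin, nsmul_eq_mul]
      have h2 : t * S2 = n * (S1 + t * S2) :=
        calc t * S2 = ∑ j : Fin n, t * u (Fin.natAdd n j) := by
              rw [hS2def, Finset.mul_sum]
          _ = ∑ _j : Fin n, (S1 + t * S2) := Finset.sum_congr rfl fun j _ => hEB j
          _ = n * (S1 + t * S2) := by
              rw [Finset.sum_const, Finset.card_univ, Fintype.card_fin, nsmul_eq_mul]
      have hfac : t * ((n:ℝ) - 1) - n ≠ 0 := by
        intro h
        apply hne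
        rw [eq_div_iff (by linarith : (n:ℝ) - 1 ≠ 0)]
        linarith
      have hS1 : (t * ((n:ℝ) - 1) - n) * ((t * ((n:ℝ) - 1) + n) * S1) = 0 := by
        linear_combination (t * (1 - (n:ℝ))) * h1 + (n:ℝ) * h2
      have hpos : t * ((n:ℝ) - 1) + n > 0 := by nlinarith
      have hS10 : S1 = 0 := by
        rcases mul_eq_zero.mp hS1 with h | h
        · exact absurd h hfac
        · rcases mul_eq_zero.mp h with h | h
          · linarith
          · exact h
      have hS20 : S2 = 0 := by
        rw [hS10] at h1
        have : (n:ℝ) * S2 = 0 := by linarith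
        exact (mul_eq_zero.mp this).resolve_left hn0
      funext i
      have := hE i
      rw [hS10, hS20] at this
      have ht : t * u i = 0 := by
        rcases lt_or_ge ((i:ℕ)) n with h | h
        · rw [if_pos h] at this; linarith
        · rw [if_neg (not_lt.mpr h)] at this; linarith
      have := (mul_eq_zero.mp ht).resolve_left (ne_of_gt ht0)
      simpa using this
    · -- 2^p = n/(n-1) → singular
      intro hp
      intro hunit
      have hinj := Matrix.mulVec_injective_iff_isUnit.mpr hunit
      have h0 : (D p).mulVec α = (D p).mulVec 0 := by
        rw [hker p hp, Matrix.mulVec_zero]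
      exact hαne (hinj h0)
  · apply hker
    have hpos : (0:ℝ) < (n : ℝ) / ((n : ℝ) - 1) := by positivity
    exact Real.rpow_logb (by norm_num) (by norm_num) hpos
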